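/- Let C(ω) ⊆ ℝᵈ be a measurable closed convex-valued mapping on a probability space, and suppose 0 ∈ D where D = {x ∈ L^∞ : x(ω) ∈ C(ω) a.s. and ∃r>0 with B(x(ω),r) ∩ aff C(ω) ⊆ C(ω) a.s.}. Then the affine hull of D in L^∞ equals L^∞(aff C) = {x ∈ L^∞ : x(ω) ∈ aff C(ω) a.s.}, which is a norm-closed subspace of L^∞, and D coincides with the relative strong interior of L^∞(C) = {x ∈ L^∞ : x(ω) ∈ C(ω) a.s.}. -/

import Mathlib

open MeasureTheory
open scoped ENNReal

/-- `L^∞(S)`: bounded measurable functions with values a.s. in `S(ω)`. -/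
def LinfOf {d : ℕ} {Ω : Type*} [MeasurableSpace Ω] (μ : Measure Ω)
    (S : Ω → Set (Fin d → ℝ)) : Set (Ω → Fin d → ℝ) :=
  {x | Measurable x ∧ (∃ C : ℝ, ∀ ω, ‖x ω‖ ≤ C) ∧ ∀ᵐ ω ∂μ, x ω ∈ S ω}

/-- The set `D` of bounded measurable selections lying uniformly in the relative
interior of `C(ω)`. -/
def Dset {d : ℕ} {Ω : Type*} [MeasurableSpace Ω] (μ : Measure Ω)
    (C : Ω → Set (Fin d → ℝ)) : Set (Ω → Fin d → ℝ) :=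
  {x | Measurable x ∧ (∃ Cb : ℝ, ∀ ω, ‖x ω‖ ≤ Cb) ∧ (∀ᵐ ω ∂μ, x ω ∈ C ω) ∧
    ∃ r : ℝ, 0 < r ∧ ∀ᵐ ω ∂μ, ∀ y : Fin d → ℝ, ‖y - x ω‖ ≤ r →
      y ∈ (affineSpan ℝ (C ω) : Set (Fin d → ℝ)) → y ∈ C ω}

/-- Affine subspaces (as sets) are closed under the combination `c • (p1 - p2) + p3`. -/
lemma aff_comb {d : ℕ} {s : Set (Fin d → ℝ)} (c : ℝ) {p1 p2 p3 : Fin d → ℝ}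
    (h1 : p1 ∈ (affineSpan ℝ s : Set (Fin d → ℝ)))
    (h2 : p2 ∈ (affineSpan ℝ s : Set (Fin d → ℝ)))
    (h3 : p3 ∈ (affineSpan ℝ s : Set (Fin d → ℝ))) :
    c • (p1 - p2) + p3 ∈ (affineSpan ℝ s : Set (Fin d → ℝ)) := by
  simpa using AffineSubspace.smul_vsub_vadd_mem (affineSpan ℝ s) c h1 h2 h3

/-- if `0 ∈ D` then `aff D = L^∞(aff C)`, this set is closed under
(a.e.-uniform) limits in `L^∞`, and `D` is the relative strong interior of `L^∞(C)`. -/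
theorem stmt10 {d : ℕ} {Ω : Type*} [mF : MeasurableSpace Ω]
    (μ : Measure Ω) [IsProbabilityMeasure μ]
    (C : Ω → Set (Fin d → ℝ))
    (hCclosed : ∀ ω, IsClosed (C ω)) (hCconv : ∀ ω, Convex ℝ (C ω))
    (hCmeas : MeasurableSet {p : Ω × (Fin d → ℝ) | p.2 ∈ C p.1})
    (h0D : (0 : Ω → Fin d → ℝ) ∈ Dset μ C) :
    -- (1) the affine hull of `D` is `L^∞(aff C)`
    ((affineSpan ℝ (Dset μ C) : Set (Ω → Fin d → ℝ))
        = LinfOf μ (fun ω => (affineSpan ℝ (C ω) : Set (Fin d → ℝ)))) ∧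
    -- (2) `L^∞(aff C)` is norm-closed: stable under a.e.-uniform limits
    (∀ (zs : ℕ → Ω → Fin d → ℝ) (z : Ω → Fin d → ℝ),
      (∀ k, zs k ∈ LinfOf μ (fun ω => (affineSpan ℝ (C ω) : Set (Fin d → ℝ)))) →
      Measurable z → (∃ Cb : ℝ, ∀ ω, ‖z ω‖ ≤ Cb) →
      (∀ ε : ℝ, 0 < ε → ∃ N : ℕ, ∀ k ≥ N, ∀ᵐ ω ∂μ, ‖zs k ω - z ω‖ ≤ ε) →
      z ∈ LinfOf μ (fun ω => (affineSpan ℝ (C ω) : Set (Fin d → ℝ)))) ∧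
    -- (3) `D` is the relative strong interior of `L^∞(C)`
    (Dset μ C = {x ∈ LinfOf μ C | ∃ ε : ℝ, 0 < ε ∧
      ∀ y ∈ LinfOf μ (fun ω => (affineSpan ℝ (C ω) : Set (Fin d → ℝ))),
        (∀ᵐ ω ∂μ, ‖y ω - x ω‖ ≤ ε) → y ∈ LinfOf μ C}) := by
  obtain ⟨h0m, h0b, h0C, r, hr, hball⟩ := h0D
  simp only [Pi.zero_apply, sub_zero] at hball h0C
  have h0aff : ∀ᵐ ω ∂μ, (0 : Fin d → ℝ) ∈ (affineSpan ℝ (C ω) : Set (Fin d → ℝ)) :=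
    h0C.mono fun ω h => subset_affineSpan ℝ _ h
  -- the set L^∞(aff C) as an affine subspace of the function space
  set Q : AffineSubspace ℝ (Ω → Fin d → ℝ) :=
    { carrier := LinfOf μ (fun ω => (affineSpan ℝ (C ω) : Set (Fin d → ℝ)))
      smul_vsub_vadd_mem' := by
        rintro c p1 p2 p3 ⟨h1m, ⟨C1, h1b⟩, h1a⟩ ⟨h2m, ⟨C2, h2b⟩, h2a⟩ ⟨h3m, ⟨C3, h3b⟩, h3a⟩
        refine ⟨?_, ⟨|c| * (C1 + C2) + C3, fun ω => ?_⟩, ?_⟩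
        · exact ((h1m.sub h2m).const_smul c).add h3m
        · have : (c • (p1 -ᵥ p2) +ᵥ p3) ω = c • (p1 ω - p2 ω) + p3 ω := rfl
          rw [this]
          calc ‖c • (p1 ω - p2 ω) + p3 ω‖ ≤ ‖c • (p1 ω - p2 ω)‖ + ‖p3 ω‖ := norm_add_le _ _
            _ = |c| * ‖p1 ω - p2 ω‖ + ‖p3 ω‖ := by rw [norm_smul, Real.norm_eq_abs]
            _ ≤ |c| * (‖p1 ω‖ + ‖p2 ω‖) + ‖p3 ω‖ := by
                gcongr
                exact norm_sub_le _ _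
            _ ≤ |c| * (C1 + C2) + C3 := by
                gcongr
                exacts [h1b ω, h2b ω, h3b ω]
        · filter_upwards [h1a, h2a, h3a] with ω h1 h2 h3
          have : (c • (p1 -ᵥ p2) +ᵥ p3) ω = c • (p1 ω - p2 ω) + p3 ω := rfl
          rw [this]
          exact aff_comb c h1 h2 h3 }
  have hDsub : Dset μ C ⊆ (Q : Set (Ω → Fin d → ℝ)) := by
    rintro x ⟨hxm, hxb, hxC, _⟩
    exact ⟨hxm, hxb, hxC.mono fun ω h => subset_affineSpan ℝ _ h⟩
  have h0D' : (0 : Ω → Fin d → ℝ) ∈ Dset μ C := by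
    refine ⟨h0m, h0b, h0C, r, hr, ?_⟩
    filter_upwards [hball] with ω hb
    intro y hy hya
    exact hb y (by simpa using hy) hya
  constructor
  · -- Part (1)
    apply subset_antisymm
    · exact (affineSpan_le.mpr hDsub : affineSpan ℝ (Dset μ C) ≤ Q)
    · rintro x ⟨hxm, ⟨Cb, hCb⟩, hxa⟩
      set M : ℝ := max Cb 0 with hM
      have hM0 : 0 ≤ M := le_max_right _ _
      have hxM : ∀ ω, ‖x ω‖ ≤ M := fun ω => le_trans (hCb ω) (le_max_left _ _)
      set lam : ℝ := r / (2 * (M + 1)) with hlam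
      have hlam0 : 0 < lam := div_pos hr (by linarith)
      have hlamM : lam * M ≤ r / 2 := by
        rw [hlam]
        rw [div_mul_eq_mul_div, div_le_div_iff₀ (by linarith) (by norm_num)]
        nlinarith
      have hmemD : (fun ω => lam • x ω) ∈ Dset μ C := by
        refine ⟨hxm.const_smul lam, ⟨r / 2, fun ω => ?_⟩, ?_, r / 2, by linarith, ?_⟩
        · calc ‖lam • x ω‖ = |lam| * ‖x ω‖ := by rw [norm_smul, Real.norm_eq_abs]
            _ = lam * ‖x ω‖ := by rw [abs_of_pos hlam0]
            _ ≤ lam * M := by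
                have := hxM ω
                nlinarith
            _ ≤ r / 2 := hlamM
        · filter_upwards [hxa, hball, h0aff] with ω hx hb h0
          have haff : lam • x ω ∈ (affineSpan ℝ (C ω) : Set (Fin d → ℝ)) := by
            have := aff_comb lam hx h0 h0
            simpa using this
          refine hb _ ?_ haff
          calc ‖lam • x ω‖ = lam * ‖x ω‖ := by
                rw [norm_smul, Real.norm_eq_abs, abs_of_pos hlam0]
            _ ≤ lam * M := by have := hxM ω; nlinarith
            _ ≤ r := by linarith
        · filter_upwards [hball] with ω hb
          intro y hy hya
          refine hb y ?_ hya
          have h1 : ‖y‖ ≤ ‖y - lam • x ω‖ + ‖lam • x ω‖ := by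
            simpa using norm_add_le (y - lam • x ω) (lam • x ω)
          have h2 : ‖lam • x ω‖ ≤ r / 2 := by
            calc ‖lam • x ω‖ = lam * ‖x ω‖ := by
                  rw [norm_smul, Real.norm_eq_abs, abs_of_pos hlam0]
              _ ≤ lam * M := by have := hxM ω; nlinarith
              _ ≤ r / 2 := hlamM
          linarith
      -- x is an affine combination of lam • x and 0, both in D
      have hx1 : (fun ω => lam • x ω) ∈ affineSpan ℝ (Dset μ C) :=
        subset_affineSpan ℝ _ hmemD
      have hx0 : (0 : Ω → Fin d → ℝ) ∈ affineSpan ℝ (Dset μ C) :=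
        subset_affineSpan ℝ _ h0D'
      have := AffineSubspace.smul_vsub_vadd_mem (affineSpan ℝ (Dset μ C)) (1 / lam) hx1 hx0 hx0
      have hxeq : (1 / lam) • ((fun ω => lam • x ω) -ᵥ (0 : Ω → Fin d → ℝ)) +ᵥ
          (0 : Ω → Fin d → ℝ) = x := by
        funext ω
        show (1 / lam) • (lam • x ω - 0) + 0 = x ω
        rw [sub_zero, add_zero, smul_smul, one_div, inv_mul_cancel₀ (ne_of_gt hlam0), one_smul]
      rw [hxeq] at this
      exact this
  constructor
  · -- Part (2)
    intro zs z hzs hzm hzb hconv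
    refine ⟨hzm, hzb, ?_⟩
    have key : ∀ n : ℕ, ∃ k : ℕ, ∀ᵐ ω ∂μ, ‖zs k ω - z ω‖ ≤ 1 / (n + 1) := by
      intro n
      obtain ⟨N, hN⟩ := hconv (1 / (n + 1)) (by positivity)
      exact ⟨N, hN N le_rfl⟩
    choose k hk using key
    have h2 : ∀ᵐ ω ∂μ, ∀ n : ℕ, ‖zs (k n) ω - z ω‖ ≤ 1 / (n + 1) := ae_all_iff.mpr hk
    have h3 : ∀ᵐ ω ∂μ, ∀ m : ℕ, zs m ω ∈ (affineSpan ℝ (C ω) : Set (Fin d → ℝ)) :=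
      ae_all_iff.mpr fun m => (hzs m).2.2
    filter_upwards [h2, h3] with ω hω1 hω2
    have hcl : IsClosed ((affineSpan ℝ (C ω) : Set (Fin d → ℝ))) :=
      (affineSpan ℝ (C ω)).closed_of_finiteDimensional
    rw [← hcl.closure_eq]
    rw [Metric.mem_closure_iff]
    intro ε hε
    obtain ⟨n, hn⟩ := exists_nat_one_div_lt hε
    refine ⟨zs (k n) ω, hω2 _, ?_⟩
    rw [dist_eq_norm, norm_sub_rev]
    calc ‖zs (k n) ω - z ω‖ ≤ 1 / (n + 1) := hω1 n
      _ < ε := by exact_mod_cast hn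
  · -- Part (3)
    ext x
    constructor
    · rintro ⟨hxm, hxb, hxC, ρ, hρ, hρball⟩
      refine ⟨⟨hxm, hxb, hxC⟩, ρ, hρ, ?_⟩
      rintro y ⟨hym, hyb, hya⟩ hclose
      refine ⟨hym, hyb, ?_⟩
      filter_upwards [hya, hclose, hρball] with ω h1 h2 h3
      exact h3 _ h2 h1
    · rintro ⟨⟨hxm, ⟨Cb, hCb⟩, hxC⟩, ε, hε, hP⟩
      set M : ℝ := max Cb 0 with hM
      have hM0 : 0 ≤ M := le_max_right _ _
      have hxM : ∀ ω, ‖x ω‖ ≤ M := fun ω => le_trans (hCb ω) (le_max_left _ _)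
      set t : ℝ := ε / (M + 1) with ht
      have ht0 : 0 < t := div_pos hε (by linarith)
      have h1t : (0:ℝ) < 1 + t := by linarith
      -- the pushed-out point (1+t) • x
      have hy : (fun ω => (1 + t) • x ω) ∈
          LinfOf μ (fun ω => (affineSpan ℝ (C ω) : Set (Fin d → ℝ))) := by
        refine ⟨hxm.const_smul (1 + t), ⟨(1 + t) * M, fun ω => ?_⟩, ?_⟩
        · have h1 : ‖(1 + t) • x ω‖ = (1 + t) * ‖x ω‖ := by
            rw [norm_smul, Real.norm_eq_abs, abs_of_pos h1t]
          have h2 := hxM ω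
          rw [h1]
          nlinarith
        · filter_upwards [hxC, h0aff] with ω hx h0
          have hx' : x ω ∈ (affineSpan ℝ (C ω) : Set (Fin d → ℝ)) := subset_affineSpan ℝ _ hx
          have := aff_comb (1 + t) hx' h0 h0
          simpa using this
      have hclose : ∀ᵐ ω ∂μ, ‖(fun ω => (1 + t) • x ω) ω - x ω‖ ≤ ε := by
        refine Filter.Eventually.of_forall fun ω => ?_
        have heq : (1 + t) • x ω - x ω = t • x ω := by
          rw [add_smul, one_smul]; abel
        show ‖(1 + t) • x ω - x ω‖ ≤ ε
        rw [heq, norm_smul, Real.norm_eq_abs, abs_of_pos ht0]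
        have h1 : t * ‖x ω‖ ≤ t * M := by have := hxM ω; nlinarith
        have h2 : t * (M + 1) = ε := by
          rw [ht, div_mul_cancel₀ _ (by linarith : (M:ℝ) + 1 ≠ 0)]
        nlinarith
      have hyC := hP _ hy hclose
      -- now build the pointwise relative interiority of x
      set s : ℝ := t / (1 + t) with hs
      have hs0 : 0 < s := div_pos ht0 h1t
      have hs1 : s < 1 := (div_lt_one h1t).mpr (by linarith)
      have hkey : (1 - s) * (1 + t) = 1 := by
        rw [hs]; field_simp; ring
      refine ⟨hxm, ⟨Cb, hCb⟩, hxC, s * r, mul_pos hs0 hr, ?_⟩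
      filter_upwards [hyC.2.2, hball, h0aff] with ω hp hb h0a
      intro y hyr hyaff
      set p : Fin d → ℝ := (1 + t) • x ω with hpdef
      have hpC : p ∈ C ω := hp
      have hpaff : p ∈ (affineSpan ℝ (C ω) : Set (Fin d → ℝ)) := subset_affineSpan ℝ _ hpC
      have hxp : (1 - s) • p = x ω := by
        rw [hpdef, smul_smul, hkey, one_smul]
      set w : Fin d → ℝ := s⁻¹ • (y - p) + p with hwdef
      have hwaff : w ∈ (affineSpan ℝ (C ω) : Set (Fin d → ℝ)) := aff_comb s⁻¹ hyaff hpaff hpaff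
      have hsw : s • w = y - (1 - s) • p := by
        rw [hwdef, smul_add, smul_smul, mul_inv_cancel₀ (ne_of_gt hs0), one_smul, sub_smul,
          one_smul]
        abel
      have hwnorm : ‖w‖ ≤ r := by
        have h1 : s • w = y - x ω := by rw [hsw, hxp]
        have h2 : s * ‖w‖ = ‖y - x ω‖ := by
          rw [← h1, norm_smul, Real.norm_eq_abs, abs_of_pos hs0]
        have : s * ‖w‖ ≤ s * r := by rw [h2]; exact hyr
        exact le_of_mul_le_mul_left this hs0
      have hwC : w ∈ C ω := hb w hwnorm hwaff
      have hcomb : (1 - s) • p + s • w ∈ C ω :=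
        hCconv ω hpC hwC (by linarith) (le_of_lt hs0) (by ring)
      have : (1 - s) • p + s • w = y := by
        rw [hsw, hxp]; abel
      rwa [this] at hcomb
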